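/- Let R be a commutative ring containing the rationals in which the only idempotents are 0 and 1, and let (f_n)_{n≥0} be a weak convolution family in R[[x]], i.e., ∑_{k=0}^n f_k(x) f_{n-k}(x) = f_n(2x) in R[[x]] for all n ≥ 0. Then either f_n = 0 for all n, or else there exists a unique formal power series Ψ ∈ R[[t]] such that f_n(x) = [t^n] e^{xΨ(t)} for all n ≥ 0. -/

import Mathlib

noncomputable section

open PowerSeries

/-- The embedding of `R[[t]]` into the two-variable power series ring `R[[x,t]]`
(where `x` is variable `0` and `t` is variable `1`), sending `t ↦ t`. -/
def tEmb {R : Type*} [CommRing R] (Ψ : PowerSeries R) : MvPowerSeries (Fin 2) R :=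
  fun e => if e 0 = 0 then PowerSeries.coeff (R := R) (e 1) Ψ else 0

/-- Substitution of a multivariate power series `a` (intended to have zero constant
term) for the variable of a univariate power series `f`:  `f(a) = ∑ₙ fₙ aⁿ`.
When the constant term of `a` is zero, the coefficient of a monomial `e` in `aⁿ`
vanishes whenever `n` exceeds the total degree of `e`, so the finite sum below
computes the genuine substitution `∑ₙ fₙ aⁿ`. -/
def psubst {R : Type*} [CommRing R] {σ : Type*} (a : MvPowerSeries σ R)
    (f : PowerSeries R) : MvPowerSeries σ R :=
  fun e => ∑ n ∈ Finset.range ((e.sum fun _ m => m) + 1),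
    PowerSeries.coeff (R := R) n f * MvPowerSeries.coeff (R := R) e (a ^ n)

/-- The formal power series `e^{xΨ(t)} ∈ R[[x,t]]`, where `x` is variable `0`
and `t` is variable `1`.  It is well defined since `x·Ψ(t)` has zero constant term. -/
def expXPsi {R : Type*} [CommRing R] [Algebra ℚ R] (Ψ : PowerSeries R) :
    MvPowerSeries (Fin 2) R :=
  psubst (MvPowerSeries.X 0 * tEmb Ψ) (PowerSeries.exp R)

/-- `f_n(x) = [tⁿ] e^{xΨ(t)} ∈ R[[x]]`: the coefficient of `tⁿ` in `e^{xΨ(t)}`,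
as a power series in `x`. -/
def convFam {R : Type*} [CommRing R] [Algebra ℚ R] (Ψ : PowerSeries R) (n : ℕ) :
    PowerSeries R :=
  PowerSeries.mk fun m =>
    MvPowerSeries.coeff (R := R) (Finsupp.single 0 m + Finsupp.single 1 n) (expXPsi Ψ)

namespace WCF
variable {R : Type*} [CommRing R]

lemma coeff_tEmb (Ψ : PowerSeries R) (e : Fin 2 →₀ ℕ) :
    MvPowerSeries.coeff (R := R) e (tEmb Ψ) = if e 0 = 0 then PowerSeries.coeff (R := R) (e 1) Ψ else 0 := rfl

lemma eq_single_snd (e : Fin 2 →₀ ℕ) (h : e 0 = 0) : e = Finsupp.single 1 (e 1) := by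
  ext i; fin_cases i <;> simp [h, Finsupp.single_apply]

lemma coeff_tEmb_pow (Ψ : PowerSeries R) (j : ℕ) (e : Fin 2 →₀ ℕ) :
    MvPowerSeries.coeff (R := R) e ((tEmb Ψ) ^ j)
      = if e 0 = 0 then PowerSeries.coeff (R := R) (e 1) (Ψ ^ j) else 0 := by
  induction j generalizing e with
  | zero =>
    simp only [pow_zero, MvPowerSeries.coeff_one, PowerSeries.coeff_one]
    by_cases h : e 0 = 0
    · rw [if_pos h]
      by_cases h1 : e 1 = 0
      · have : e = 0 := by ext i; fin_cases i <;> simp [h, h1]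
        simp [this, h1]
      · have : e ≠ 0 := fun he => by simp [he] at h1
        simp [this, h1]
    · have : e ≠ 0 := fun he => by simp [he] at h
      simp [this, h]
  | succ j IH =>
    rw [pow_succ']
    rw [MvPowerSeries.coeff_mul]
    by_cases h : e 0 = 0
    · rw [if_pos h]
      rw [eq_single_snd e h, Finsupp.antidiagonal_single, Finset.sum_map]
      rw [pow_succ', PowerSeries.coeff_mul]
      simp only [Finsupp.single_eq_same]
      apply Finset.sum_congr rfl
      rintro ⟨a, b⟩ _
      simp only [Function.Embedding.coe_prodMap, Function.Embedding.coeFn_mk, Prod.map_apply]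
      rw [coeff_tEmb, IH]
      simp [Finsupp.single_apply]
    · rw [if_neg h]
      apply Finset.sum_eq_zero
      rintro ⟨u, v⟩ huv
      rw [Finset.HasAntidiagonal.mem_antidiagonal] at huv
      have huv0 : u 0 + v 0 = e 0 := by rw [← huv]; simp
      by_cases hu : u 0 = 0
      · have hv : v 0 ≠ 0 := by omega
        rw [IH, if_neg hv, mul_zero]
      · rw [coeff_tEmb, if_neg hu, zero_mul]

variable [Algebra ℚ R]

lemma coeff_xtEmb_pow (Ψ : PowerSeries R) (j m n : ℕ) :
    MvPowerSeries.coeff (R := R) (Finsupp.single 0 m + Finsupp.single 1 n)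
      ((MvPowerSeries.X 0 * tEmb Ψ) ^ j)
    = if j = m then PowerSeries.coeff (R := R) n (Ψ ^ m) else 0 := by
  rw [mul_pow, MvPowerSeries.X_pow_eq, MvPowerSeries.coeff_monomial_mul]
  have hle : (Finsupp.single (0 : Fin 2) j ≤ Finsupp.single 0 m + Finsupp.single 1 n) ↔ j ≤ m := by
    rw [Finsupp.single_le_iff]; simp
  by_cases hj : j ≤ m
  · rw [if_pos (hle.2 hj)]
    have hsub : (Finsupp.single (0:Fin 2) m + Finsupp.single 1 n) - Finsupp.single 0 j
        = Finsupp.single 0 (m - j) + Finsupp.single 1 n := by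
      ext i; fin_cases i <;> simp [Finsupp.single_apply, Finsupp.tsub_apply]
    rw [hsub, coeff_tEmb_pow]
    have h0 : (Finsupp.single (0:Fin 2) (m - j) + Finsupp.single 1 n : Fin 2 →₀ ℕ) 0 = m - j := by simp
    have h1 : (Finsupp.single (0:Fin 2) (m - j) + Finsupp.single 1 n : Fin 2 →₀ ℕ) 1 = n := by simp
    rw [h0, h1]
    by_cases hjm : j = m
    · subst hjm; simp
    · rw [if_neg (by omega), if_neg hjm, one_mul]
  · rw [if_neg (fun h => hj (hle.1 h)), if_neg (by omega)]

lemma coeff_convFam (Ψ : PowerSeries R) (n m : ℕ) :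
    PowerSeries.coeff (R := R) m (convFam Ψ n)
      = algebraMap ℚ R (1 / m.factorial) * PowerSeries.coeff (R := R) n (Ψ ^ m) := by
  rw [convFam, PowerSeries.coeff_mk]
  have hcoeff : MvPowerSeries.coeff (R := R) (Finsupp.single 0 m + Finsupp.single 1 n) (expXPsi Ψ)
      = ∑ j ∈ Finset.range (((Finsupp.single (0:Fin 2) m + Finsupp.single 1 n).sum
          fun _ k => k) + 1),
        PowerSeries.coeff (R := R) j (PowerSeries.exp R) *
          MvPowerSeries.coeff (R := R) (Finsupp.single 0 m + Finsupp.single 1 n)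
            ((MvPowerSeries.X 0 * tEmb Ψ) ^ j) := rfl
  have hsum : ((Finsupp.single (0:Fin 2) m + Finsupp.single 1 n).sum fun _ k => k) = m + n := by
    rw [Finsupp.sum_add_index' (fun _ => rfl) (fun _ _ _ => rfl)]
    simp [Finsupp.sum_single_index]
  rw [hcoeff, hsum]
  have : ∀ j ∈ Finset.range (m + n + 1),
      PowerSeries.coeff (R := R) j (PowerSeries.exp R) *
        MvPowerSeries.coeff (R := R) (Finsupp.single 0 m + Finsupp.single 1 n)
          ((MvPowerSeries.X 0 * tEmb Ψ) ^ j)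
      = if j = m then PowerSeries.coeff (R := R) m (PowerSeries.exp R)
          * PowerSeries.coeff (R := R) n (Ψ ^ m) else 0 := by
    intro j _
    rw [coeff_xtEmb_pow]
    by_cases hj : j = m
    · subst hj; simp
    · simp [hj]
  rw [Finset.sum_congr rfl this, Finset.sum_ite_eq' (Finset.range (m + n + 1)) m,
    if_pos (by simp), PowerSeries.coeff_exp]


lemma qsum (m : ℕ) :
    ∑ p ∈ Finset.HasAntidiagonal.antidiagonal m, ((1 : ℚ) / p.1.factorial) * ((1:ℚ) / p.2.factorial)
      = 2 ^ m * (1 / m.factorial) := by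
  rw [Finset.Nat.sum_antidiagonal_eq_sum_range_succ_mk]
  have h : ∀ i ∈ Finset.range (m + 1),
      ((1 : ℚ) / i.factorial) * ((1:ℚ) / (m - i).factorial)
        = (m.choose i : ℚ) * (1 / m.factorial) := by
    intro i hi
    rw [Finset.mem_range] at hi
    have hle : i ≤ m := by omega
    rw [Nat.cast_choose ℚ hle]
    have h1 : (i.factorial : ℚ) ≠ 0 := Nat.cast_ne_zero.2 (Nat.factorial_ne_zero i)
    have h2 : ((m - i).factorial : ℚ) ≠ 0 := Nat.cast_ne_zero.2 (Nat.factorial_ne_zero _)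
    have h3 : (m.factorial : ℚ) ≠ 0 := Nat.cast_ne_zero.2 (Nat.factorial_ne_zero m)
    field_simp
  rw [Finset.sum_congr rfl h, ← Finset.sum_mul]
  have h2 : ∑ i ∈ Finset.range (m + 1), (m.choose i : ℚ) = 2 ^ m := by
    exact_mod_cast congrArg (Nat.cast : ℕ → ℚ) (Nat.sum_range_choose m)
  rw [h2]

lemma cancel_rat {q : ℚ} (hq : q ≠ 0) {x : R} (h : algebraMap ℚ R q * x = 0) : x = 0 := by
  have h2 := congrArg (fun y => algebraMap ℚ R q⁻¹ * y) h
  simpa [← mul_assoc, ← map_mul, inv_mul_cancel₀ hq] using h2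

lemma two_pow_R (m : ℕ) : (2 : R) ^ m = algebraMap ℚ R (2 ^ m) := by
  rw [map_pow, map_ofNat]

lemma convFam_rel (Ψ : PowerSeries R) (n m : ℕ) :
    ∑ k ∈ Finset.range (n + 1), ∑ p ∈ Finset.HasAntidiagonal.antidiagonal m,
      PowerSeries.coeff (R := R) p.1 (convFam Ψ k) * PowerSeries.coeff (R := R) p.2 (convFam Ψ (n - k))
    = 2 ^ m * PowerSeries.coeff (R := R) m (convFam Ψ n) := by
  rw [Finset.sum_comm]
  have hinner : ∀ p ∈ Finset.HasAntidiagonal.antidiagonal m,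
      ∑ k ∈ Finset.range (n + 1),
        PowerSeries.coeff (R := R) p.1 (convFam Ψ k) * PowerSeries.coeff (R := R) p.2 (convFam Ψ (n - k))
      = algebraMap ℚ R ((1 / p.1.factorial) * (1 / p.2.factorial))
          * PowerSeries.coeff (R := R) n (Ψ ^ m) := by
    rintro ⟨i, j⟩ hp
    rw [Finset.HasAntidiagonal.mem_antidiagonal] at hp
    simp only [coeff_convFam]
    have : ∀ k ∈ Finset.range (n + 1),
        (algebraMap ℚ R (1 / i.factorial) * PowerSeries.coeff (R := R) k (Ψ ^ i)) *
          (algebraMap ℚ R (1 / j.factorial) * PowerSeries.coeff (R := R) (n - k) (Ψ ^ j))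
        = algebraMap ℚ R ((1 / i.factorial) * (1 / j.factorial)) *
            (PowerSeries.coeff (R := R) k (Ψ ^ i) * PowerSeries.coeff (R := R) (n - k) (Ψ ^ j)) := by
      intro k _
      rw [map_mul]; ring
    rw [Finset.sum_congr rfl this, ← Finset.mul_sum]
    congr 1
    have hmul : PowerSeries.coeff (R := R) n (Ψ ^ i * Ψ ^ j)
        = ∑ k ∈ Finset.range (n + 1),
            PowerSeries.coeff (R := R) k (Ψ ^ i) * PowerSeries.coeff (R := R) (n - k) (Ψ ^ j) := by
      rw [PowerSeries.coeff_mul, Finset.Nat.sum_antidiagonal_eq_sum_range_succ_mk]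
    rw [← hmul, ← pow_add, hp]
  rw [Finset.sum_congr rfl hinner]
  rw [← Finset.sum_mul]
  rw [← map_sum]
  rw [qsum]
  rw [map_mul]
  rw [coeff_convFam]
  rw [← two_pow_R, mul_assoc]

end WCF

/-- Let `R` be a commutative ring containing the rationals in
which the only idempotents are `0` and `1`, and let `(f_n)` be a weak convolution
family in `R[[x]]`, i.e. `∑_{k=0}^n f_k(x) f_{n-k}(x) = f_n(2x)` for all `n`
(where `f_n(2x)` is the substitution `x ↦ 2x`, i.e. `rescale 2`).  Then either
`f_n = 0` for all `n`, or there exists a unique `Ψ ∈ R[[t]]` such that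
`f_n(x) = [tⁿ] e^{xΨ(t)}` for all `n`. -/


theorem weak_convolution_family_classification {R : Type*} [CommRing R] [Algebra ℚ R]
    (hidem : ∀ e : R, e * e = e → e = 0 ∨ e = 1)
    (f : ℕ → PowerSeries R)
    (hweak : ∀ n, ∑ k ∈ Finset.range (n + 1), f k * f (n - k) =
      PowerSeries.rescale (2 : R) (f n)) :
    (∀ n, f n = 0) ∨ ∃! Ψ : PowerSeries R, ∀ n, f n = convFam Ψ n := by
  classical
  have hrel : ∀ n m : ℕ,
      ∑ k ∈ Finset.range (n + 1), ∑ p ∈ Finset.HasAntidiagonal.antidiagonal m,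
        PowerSeries.coeff (R := R) p.1 (f k) * PowerSeries.coeff (R := R) p.2 (f (n - k))
      = 2 ^ m * PowerSeries.coeff (R := R) m (f n) := by
    intro n m
    have h := congrArg (fun φ => PowerSeries.coeff (R := R) m φ) (hweak n)
    simp only [map_sum, PowerSeries.coeff_rescale, PowerSeries.coeff_mul] at h
    exact h
  have haidem : PowerSeries.coeff (R := R) 0 (f 0) * PowerSeries.coeff (R := R) 0 (f 0)
      = PowerSeries.coeff (R := R) 0 (f 0) := by
    have h := hrel 0 0
    simpa using h
  rcases hidem _ haidem with h0 | h1
  · -- zero case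
    left
    have key : ∀ N n m, n + m = N → PowerSeries.coeff (R := R) m (f n) = 0 := by
      intro N
      induction N using Nat.strong_induction_on with
      | _ N IH =>
        intro n m hnm
        have h := hrel n m
        have hz : ∑ k ∈ Finset.range (n + 1), ∑ p ∈ Finset.HasAntidiagonal.antidiagonal m,
            PowerSeries.coeff (R := R) p.1 (f k) * PowerSeries.coeff (R := R) p.2 (f (n - k)) = 0 := by
          apply Finset.sum_eq_zero
          intro k hk
          apply Finset.sum_eq_zero
          rintro ⟨i, j⟩ hp
          rw [Finset.mem_range] at hk
          rw [Finset.HasAntidiagonal.mem_antidiagonal] at hp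
          by_cases hki : k = 0 ∧ i = 0
          · rw [hki.1, hki.2, h0, zero_mul]
          · by_cases hkn : k = n ∧ i = m
            · have hnk : n - k = 0 := by omega
              have hj : j = 0 := by omega
              rw [hnk, hj, h0, mul_zero]
            · have hlt : k + i < N := by omega
              rw [IH (k + i) hlt k i rfl, zero_mul]
        rw [hz] at h
        apply WCF.cancel_rat (q := 2 ^ m) (by positivity)
        rw [← WCF.two_pow_R, ← h]
    intro n
    ext m
    simpa using key (n + m) n m rfl
  · -- nonzero case
    right
    set Ψ : PowerSeries R := PowerSeries.mk (fun n => PowerSeries.coeff (R := R) 1 (f n)) with hΨ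
    have hd1 : ∀ n, PowerSeries.coeff (R := R) 1 (convFam Ψ n) = PowerSeries.coeff (R := R) 1 (f n) := by
      intro n
      rw [WCF.coeff_convFam, pow_one, hΨ, PowerSeries.coeff_mk]
      simp
    have hd00 : PowerSeries.coeff (R := R) 0 (convFam Ψ 0) = 1 := by
      rw [WCF.coeff_convFam, pow_zero]
      simp
    have key : ∀ N n m, n + m = N →
        PowerSeries.coeff (R := R) m (f n) = PowerSeries.coeff (R := R) m (convFam Ψ n) := by
      intro N
      induction N using Nat.strong_induction_on with
      | _ N IH =>
        intro n m hnm
        by_cases hm1 : m = 1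
        · subst hm1; exact (hd1 n).symm
        by_cases h00 : n = 0 ∧ m = 0
        · rw [h00.1, h00.2, h1, hd00]
        set δ := PowerSeries.coeff (R := R) m (f n) - PowerSeries.coeff (R := R) m (convFam Ψ n) with hδdef
        have hsum : ∑ k ∈ Finset.range (n + 1), ∑ p ∈ Finset.HasAntidiagonal.antidiagonal m,
            (PowerSeries.coeff (R := R) p.1 (f k) * PowerSeries.coeff (R := R) p.2 (f (n - k))
             - PowerSeries.coeff (R := R) p.1 (convFam Ψ k)
                * PowerSeries.coeff (R := R) p.2 (convFam Ψ (n - k)))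
            = 2 ^ m * δ := by
          simp only [Finset.sum_sub_distrib]
          rw [hrel n m, WCF.convFam_rel, hδdef, mul_sub]
        have hpt : ∀ k ∈ Finset.range (n + 1), ∀ p ∈ Finset.HasAntidiagonal.antidiagonal m,
            (PowerSeries.coeff (R := R) p.1 (f k) * PowerSeries.coeff (R := R) p.2 (f (n - k))
             - PowerSeries.coeff (R := R) p.1 (convFam Ψ k)
                * PowerSeries.coeff (R := R) p.2 (convFam Ψ (n - k)))
            = (if k = 0 ∧ p.1 = 0 then δ else 0) + (if k = n ∧ p.1 = m then δ else 0) := by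
          intro k hk p hp
          obtain ⟨i, j⟩ := p
          rw [Finset.mem_range] at hk
          rw [Finset.HasAntidiagonal.mem_antidiagonal] at hp
          simp only
          by_cases hA : k = 0 ∧ i = 0
          · obtain ⟨hk0, hi0⟩ := hA
            subst hk0; subst hi0
            have hj : j = m := by omega
            subst hj
            rw [if_pos ⟨rfl, rfl⟩, if_neg (by omega), Nat.sub_zero, h1, hd00, one_mul, one_mul,
              add_zero]
          · rw [if_neg hA]
            by_cases hB : k = n ∧ i = m
            · obtain ⟨hkn, him⟩ := hB
              subst hkn; subst him
              have hj : j = 0 := by omega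
              subst hj
              rw [if_pos ⟨rfl, rfl⟩, Nat.sub_self, h1, hd00, mul_one, mul_one, zero_add]
            · rw [if_neg hB]
              have e1 : PowerSeries.coeff (R := R) i (f k) = PowerSeries.coeff (R := R) i (convFam Ψ k) :=
                IH (k + i) (by omega) k i rfl
              have e2 : PowerSeries.coeff (R := R) j (f (n - k))
                  = PowerSeries.coeff (R := R) j (convFam Ψ (n - k)) :=
                IH ((n - k) + j) (by omega) (n - k) j rfl
              rw [e1, e2, sub_self, add_zero]
        have hs1 : ∑ k ∈ Finset.range (n + 1), ∑ p ∈ Finset.HasAntidiagonal.antidiagonal m,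
            (if k = 0 ∧ p.1 = 0 then δ else 0) = δ := by
          rw [Finset.sum_eq_single 0]
          · rw [Finset.sum_eq_single ((0 : ℕ), m)]
            · simp
            · rintro ⟨i, j⟩ hp hne
              rw [Finset.HasAntidiagonal.mem_antidiagonal] at hp
              rw [if_neg]
              rintro ⟨-, hi⟩
              exact hne (by simp at hi ⊢; omega)
            · intro habs
              exact absurd (Finset.HasAntidiagonal.mem_antidiagonal.mpr (by omega)) habs
          · intro k _ hne
            apply Finset.sum_eq_zero
            intro p _
            rw [if_neg (by tauto)]
          · intro habs
            exact absurd (Finset.mem_range.mpr (by omega)) habs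
        have hs2 : ∑ k ∈ Finset.range (n + 1), ∑ p ∈ Finset.HasAntidiagonal.antidiagonal m,
            (if k = n ∧ p.1 = m then δ else 0) = δ := by
          rw [Finset.sum_eq_single n]
          · rw [Finset.sum_eq_single ((m : ℕ), 0)]
            · simp
            · rintro ⟨i, j⟩ hp hne
              rw [Finset.HasAntidiagonal.mem_antidiagonal] at hp
              rw [if_neg]
              rintro ⟨-, hi⟩
              exact hne (by simp at hi ⊢; omega)
            · intro habs
              exact absurd (Finset.HasAntidiagonal.mem_antidiagonal.mpr (by omega)) habs
          · intro k _ hne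
            apply Finset.sum_eq_zero
            intro p _
            rw [if_neg (by tauto)]
          · intro habs
            exact absurd (Finset.mem_range.mpr (by omega)) habs
        have h2 : 2 ^ m * δ = δ + δ := by
          rw [← hsum, Finset.sum_congr rfl (fun k hk => Finset.sum_congr rfl (hpt k hk))]
          rw [Finset.sum_congr rfl (fun k _ => Finset.sum_add_distrib),
            Finset.sum_add_distrib, hs1, hs2]
        have hq : ((2 : ℚ) ^ m - 2) ≠ 0 := by
          intro hq0
          have hℕ : (2 : ℕ) ^ m = 2 ^ 1 := by
            have : (2 : ℚ) ^ m = 2 ^ 1 := by rw [pow_one]; linarith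
            exact_mod_cast this
          exact hm1 (Nat.pow_right_injective (le_refl 2) hℕ)
        have hδ0 : δ = 0 := by
          apply WCF.cancel_rat hq
          rw [map_sub, ← WCF.two_pow_R, map_ofNat]
          linear_combination h2
        exact sub_eq_zero.mp hδ0
    refine ⟨Ψ, ?_, ?_⟩
    · intro n
      ext m
      exact key (n + m) n m rfl
    · intro Ψ' hΨ'
      ext n
      have h := congrArg (fun φ => PowerSeries.coeff (R := R) 1 φ) (hΨ' n)
      simp only [WCF.coeff_convFam, pow_one] at h
      rw [hΨ, PowerSeries.coeff_mk, h]
      simp
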